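/- Let G be a countable group with a free measure-class-preserving action on a standard probability space (X,m). Then (mod 0) the dissipative part of the action is contained in the set {x ∈ X : Σ_{g∈G} d(gm)/dm(x) < ∞}; equivalently, on the set where the orbitwise sum of Radon–Nikodym derivatives diverges, every positive-measure subset is recurrent. -/

import Mathlib

open MeasureTheory
open scoped ENNReal

/-- For a free measure-class-preserving action of a countable group, on the set where
the orbitwise sum of Radon–Nikodym derivatives diverges, every positive-measure
subset is recurrent (equivalently, the dissipative part is contained mod 0 in the
set where the sum is finite). -/
theorem stmt_5 {G X : Type*} [Group G] [Countable G] [MeasurableSpace X]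
    [StandardBorelSpace X] [MulAction G X]
    (μ : Measure X) [IsProbabilityMeasure μ]
    (hmeas : ∀ g : G, Measurable (fun x : X => g • x))
    (hfree : ∀ᵐ x ∂μ, ∀ g : G, g • x = x → g = 1)
    (r : G → X → ℝ≥0∞) (hr : ∀ g : G, Measurable (r g))
    (hrn : ∀ g : G, μ.map (fun x : X => g • x) = μ.withDensity (r g))
    (A : Set X) (hA : MeasurableSet A)
    (hAdiv : A ⊆ {x : X | (∑' g : G, r g x) = ⊤})
    (hpos : 0 < μ A) :
    ∀ᵐ x ∂μ, x ∈ A → ∃ g : G, g ≠ 1 ∧ g • x ∈ A := by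
  classical
  set W : Set X := {x | x ∈ A ∧ ∀ g : G, g ≠ 1 → g • x ∉ A} with hWdef
  have hWm : MeasurableSet W := by
    have hEq : W = A ∩ ⋂ (g : G), ⋂ (_ : g ≠ 1), (fun x => g • x) ⁻¹' Aᶜ := by
      ext x
      simp [hWdef, Set.mem_iInter]
    rw [hEq]
    exact hA.inter (MeasurableSet.iInter fun g =>
      MeasurableSet.iInter fun _ => (hmeas g) hA.compl)
  have hWsub : W ⊆ A := fun x hx => hx.1
  set S : G → Set X := fun g => (fun x => g⁻¹ • x) ⁻¹' W with hSdef
  have hSm : ∀ g, MeasurableSet (S g) := fun g => (hmeas g⁻¹) hWm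
  have hdisj : Pairwise (Function.onFun Disjoint S) := by
    intro g h hgh
    rw [Function.onFun, Set.disjoint_left]
    intro x hxg hxh
    have hy : g⁻¹ • x ∈ W := hxg
    have hz : h⁻¹ • x ∈ W := hxh
    have hne : h⁻¹ * g ≠ 1 := by
      intro hcon
      apply hgh
      have := congrArg (fun k => h * k) hcon
      simp only [mul_one, ← mul_assoc, mul_inv_cancel] at this
      simpa using this
    have hmem : (h⁻¹ * g) • (g⁻¹ • x) ∈ A := by
      have : (h⁻¹ * g) • (g⁻¹ • x) = h⁻¹ • x := by
        rw [smul_smul, mul_assoc, mul_inv_cancel, mul_one]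
      rw [this]
      exact hz.1
    exact hy.2 _ hne hmem
  have hmap : ∀ g : G, μ (S g) = ∫⁻ x in W, r g⁻¹ x ∂μ := by
    intro g
    have h1 : μ (S g) = (μ.map (fun x => g⁻¹ • x)) W :=
      (Measure.map_apply (hmeas g⁻¹) hWm).symm
    rw [h1, hrn g⁻¹, withDensity_apply _ hWm]
  have hsum : (∑' g : G, μ (S g)) ≤ 1 := by
    rw [← measure_iUnion hdisj hSm]
    exact prob_le_one
  have hW0 : μ W = 0 := by
    by_contra h0
    have hint : (∑' g : G, μ (S g)) = ∫⁻ x in W, (∑' g : G, r g⁻¹ x) ∂μ := by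
      simp_rw [hmap]
      exact (lintegral_tsum (fun g => (hr g⁻¹).aemeasurable.restrict)).symm
    have htop : (∫⁻ x in W, (∑' g : G, r g⁻¹ x) ∂μ) = ⊤ := by
      have heq : ∀ x ∈ W, (∑' g : G, r g⁻¹ x) = (⊤ : ℝ≥0∞) := by
        intro x hx
        have : (∑' g : G, r g⁻¹ x) = ∑' g : G, r g x :=
          (Equiv.inv G).tsum_eq (fun g => r g x)
        rw [this]
        exact hAdiv (hWsub hx)
      rw [setLIntegral_congr_fun hWm heq, setLIntegral_const,
        ENNReal.top_mul h0]
    rw [hint, htop] at hsum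
    exact absurd hsum (by simp)
  have hae : ∀ᵐ x ∂μ, x ∉ W := by
    rw [ae_iff]
    simpa using hW0
  filter_upwards [hae] with x hx hxA
  by_contra hcon
  push_neg at hcon
  exact hx ⟨hxA, fun g hg hgA => (hcon g hg) hgA⟩
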